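/- For every φ ∈ (0, π/2) and X, T, ρ ∈ ℝ: (i) |A(x,t; φ, X, T, ρ)| ≤ 1 + 2 sin φ for all (x,t) ∈ ℝ × ℝ, and (ii) at the peak point one has the exact value A(X, T; φ, X, T, ρ) = (1 + 2 sin φ) e^{2iT + iρ}; in particular the maximal amplitude of the breather over the unit background equals 1 + 2 sin φ. -/

import Mathlib

open Complex

/-- Wave number `K(φ) = 2 cos φ`. -/
noncomputable def Kfreq (φ : ℝ) : ℝ := 2 * Real.cos φ

/-- Growth rate `Σ(φ) = 2 sin(2φ)`. -/
noncomputable def Sfreq (φ : ℝ) : ℝ := 2 * Real.sin (2 * φ)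

/-- The Akhmediev one-breather `A(x,t; φ, X, T, ρ)`. -/
noncomputable def akhmediev (φ X T ρ : ℝ) (x t : ℝ) : ℂ :=
  Complex.exp (2 * (t : ℂ) * Complex.I + (ρ : ℂ) * Complex.I) *
    (Complex.cosh ((Sfreq φ * (t - T) : ℝ) + 2 * (φ : ℂ) * Complex.I)
      + (Real.sin φ : ℂ) * (Real.cos (Kfreq φ * (x - X)) : ℂ)) /
    (Complex.cosh ((Sfreq φ * (t - T) : ℝ))
      - (Real.sin φ : ℂ) * (Real.cos (Kfreq φ * (x - X)) : ℂ))

lemma key_ineq (s C k c : ℝ) (hs0 : 0 ≤ s) (hs1 : s ≤ 1) (hC : 1 ≤ C)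
    (hk1 : -1 ≤ k) (hk2 : k ≤ 1) (hc : c^2 = 1 - s^2) :
    (C*(1-2*s^2)+s*k)^2 + (C^2-1)*(2*s*c)^2 ≤ ((1+2*s)*(C-s*k))^2 := by
  have h1 : 0 ≤ C - k := by linarith
  have h2 : 0 ≤ C - s*k := by nlinarith
  have hG : 0 ≤ (C - k)*(C - s*k) + s*(1-s)*(1-k^2) := by
    have ha := mul_nonneg h1 h2
    have hb : 0 ≤ s*(1-s)*(1-k^2) :=
      mul_nonneg (mul_nonneg hs0 (by linarith)) (by nlinarith)
    linarith
  have h3 : (C^2-1)*(2*s*c)^2 = (C^2-1)*(4*s^2*(1-s^2)) := by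
    rw [show (2*s*c)^2 = 4*s^2*c^2 by ring, hc]
  rw [h3]
  nlinarith [mul_nonneg (mul_nonneg hs0 (by linarith : (0:ℝ) ≤ 1 + s)) hG]

lemma quot_bound (φ y k : ℝ) (hφ0 : 0 < φ) (hφ1 : φ < Real.pi / 2)
    (hk1 : -1 ≤ k) (hk2 : k ≤ 1) :
    ‖(Complex.cosh ((y : ℂ) + 2 * (φ : ℂ) * Complex.I)
        + (Real.sin φ : ℂ) * (k : ℂ))
      / (Complex.cosh ((y : ℂ)) - (Real.sin φ : ℂ) * (k : ℂ))‖
      ≤ 1 + 2 * Real.sin φ := by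
  have hpi := Real.pi_pos
  have hc0 : 0 < Real.cos φ := Real.cos_pos_of_mem_Ioo ⟨by linarith, hφ1⟩
  have hs0 : 0 < Real.sin φ := Real.sin_pos_of_pos_of_lt_pi hφ0 (by linarith)
  have hsc : Real.sin φ ^ 2 + Real.cos φ ^ 2 = 1 := Real.sin_sq_add_cos_sq φ
  have hs1 : Real.sin φ < 1 := by nlinarith
  have hcos2 : Real.cos (2*φ) = 1 - 2 * Real.sin φ ^ 2 := by
    rw [Real.cos_two_mul]; nlinarith
  have hsin2 : Real.sin (2*φ) = 2 * Real.sin φ * Real.cos φ := Real.sin_two_mul φ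
  have hC1 : 1 ≤ Real.cosh y := Real.one_le_cosh y
  have hden : 0 < Real.cosh y - Real.sin φ * k := by nlinarith
  have hφI : 2 * (φ:ℂ) * Complex.I = ((2*φ : ℝ) : ℂ) * Complex.I := by push_cast; ring
  have hnum : Complex.cosh ((y : ℂ) + 2 * (φ:ℂ) * Complex.I)
        + (Real.sin φ : ℂ) * (k : ℂ)
      = ((Real.cosh y * Real.cos (2*φ) + Real.sin φ * k : ℝ) : ℂ)
        + ((Real.sinh y * Real.sin (2*φ) : ℝ) : ℂ) * Complex.I := by
    rw [Complex.cosh_add, hφI, Complex.cosh_mul_I, Complex.sinh_mul_I]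
    push_cast; ring
  have hdenC : Complex.cosh ((y:ℂ)) - (Real.sin φ : ℂ) * (k:ℂ)
      = ((Real.cosh y - Real.sin φ * k : ℝ) : ℂ) := by
    push_cast; ring
  rw [hnum, hdenC, norm_div, Complex.norm_add_mul_I, Complex.norm_real, Real.norm_eq_abs,
    abs_of_pos hden, div_le_iff₀ hden]
  have hb : (Real.sinh y * Real.sin (2*φ))^2
      = (Real.cosh y ^ 2 - 1) * (2 * Real.sin φ * Real.cos φ)^2 := by
    rw [hsin2, mul_pow, Real.sinh_sq]
  have hkey := key_ineq (Real.sin φ) (Real.cosh y) k (Real.cos φ)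
    hs0.le hs1.le hC1 hk1 hk2 (by nlinarith)
  have hle : (Real.cosh y * Real.cos (2*φ) + Real.sin φ * k)^2
        + (Real.sinh y * Real.sin (2*φ))^2
      ≤ ((1 + 2 * Real.sin φ) * (Real.cosh y - Real.sin φ * k))^2 := by
    rw [hb, hcos2]; exact hkey
  calc Real.sqrt ((Real.cosh y * Real.cos (2*φ) + Real.sin φ * k)^2
          + (Real.sinh y * Real.sin (2*φ))^2)
      ≤ Real.sqrt (((1 + 2 * Real.sin φ) * (Real.cosh y - Real.sin φ * k))^2) :=
        Real.sqrt_le_sqrt hle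
    _ = (1 + 2 * Real.sin φ) * (Real.cosh y - Real.sin φ * k) :=
        Real.sqrt_sq (by positivity)

/-- (i) `|A(x,t)| ≤ 1 + 2 sin φ` for all `(x,t)`, and (ii) at the peak point
one has the exact value `A(X,T) = (1 + 2 sin φ) e^{2iT + iρ}`; in particular the maximal
amplitude of the breather over the unit background equals `1 + 2 sin φ`. -/
theorem akhmediev_max_amplitude (φ X T ρ : ℝ) (hφ0 : 0 < φ) (hφ1 : φ < Real.pi / 2) :
    (∀ x t : ℝ, ‖akhmediev φ X T ρ x t‖ ≤ 1 + 2 * Real.sin φ)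
    ∧ akhmediev φ X T ρ X T
        = ((1 + 2 * Real.sin φ : ℝ) : ℂ) * Complex.exp (2 * (T : ℂ) * Complex.I + (ρ : ℂ) * Complex.I) := by
  have hpi := Real.pi_pos
  have hc0 : 0 < Real.cos φ := Real.cos_pos_of_mem_Ioo ⟨by linarith, hφ1⟩
  have hs0 : 0 < Real.sin φ := Real.sin_pos_of_pos_of_lt_pi hφ0 (by linarith)
  have hsc : Real.sin φ ^ 2 + Real.cos φ ^ 2 = 1 := Real.sin_sq_add_cos_sq φ
  have hs1 : Real.sin φ < 1 := by nlinarith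
  have hcos2 : Real.cos (2*φ) = 1 - 2 * Real.sin φ ^ 2 := by
    rw [Real.cos_two_mul]; nlinarith
  constructor
  · intro x t
    have hexp : ‖Complex.exp (2 * (t:ℂ) * Complex.I + (ρ:ℂ) * Complex.I)‖ = 1 := by
      rw [show 2 * ((t:ℂ)) * Complex.I + (ρ : ℂ) * Complex.I
          = ((2*t + ρ : ℝ) : ℂ) * Complex.I by push_cast; ring, Complex.norm_exp]
      simp
    have : akhmediev φ X T ρ x t
        = Complex.exp (2 * (t : ℂ) * Complex.I + (ρ : ℂ) * Complex.I) *
          ((Complex.cosh (((Sfreq φ * (t - T) : ℝ) : ℂ) + 2 * (φ : ℂ) * Complex.I)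
            + (Real.sin φ : ℂ) * ((Real.cos (Kfreq φ * (x - X)) : ℝ) : ℂ))
          / (Complex.cosh (((Sfreq φ * (t - T) : ℝ) : ℂ))
            - (Real.sin φ : ℂ) * ((Real.cos (Kfreq φ * (x - X)) : ℝ) : ℂ))) := by
      rw [akhmediev]; ring
    rw [this, norm_mul, hexp, one_mul]
    exact quot_bound φ (Sfreq φ * (t - T)) (Real.cos (Kfreq φ * (x - X))) hφ0 hφ1
      (Real.neg_one_le_cos _) (Real.cos_le_one _)
  · rw [akhmediev]
    rw [show Sfreq φ * (T - T) = 0 by ring, show Kfreq φ * (X - X) = 0 by ring]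
    have hnum : Complex.cosh (((0:ℝ) : ℂ) + 2 * (φ:ℂ) * Complex.I)
        = ((Real.cos (2*φ) : ℝ) : ℂ) := by
      rw [Complex.ofReal_zero, zero_add,
        show 2 * (φ:ℂ) * Complex.I = ((2*φ : ℝ) : ℂ) * Complex.I by push_cast; ring,
        Complex.cosh_mul_I, Complex.ofReal_cos]
    have hden : Complex.cosh (((0:ℝ):ℂ)) = 1 := by
      simp [Complex.cosh_zero]
    rw [hnum, hden, Real.cos_zero]
    have hne : ((1 - Real.sin φ : ℝ) : ℂ) ≠ 0 := by
      have : (1 - Real.sin φ : ℝ) ≠ 0 := by linarith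
      exact_mod_cast this
    have h1 : ((Real.cos (2*φ) : ℝ) : ℂ) + (Real.sin φ : ℂ) * ((1:ℝ):ℂ)
        = ((1 + 2 * Real.sin φ : ℝ):ℂ) * ((1 - Real.sin φ : ℝ):ℂ) := by
      rw [hcos2]; push_cast; ring
    have h2 : (1 : ℂ) - (Real.sin φ : ℂ) * ((1:ℝ):ℂ) = ((1 - Real.sin φ : ℝ):ℂ) := by
      push_cast; ring
    rw [h1, h2]
    rw [mul_comm (Complex.exp _), mul_assoc, mul_div_assoc]
    congr 1
    rw [mul_comm, mul_div_assoc, div_self hne, mul_one]
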